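/- arXiv:2603.29862 — 4 statements merged into one kernel-verified Lean document; each statement's English description precedes it below -/
import Mathlib

section
/- Let T > 0, let J : ℝ → Matrix (Fin m) (Fin p) ℝ be continuous on [0,T], let J_1, …, J_k be finitely many matrices in Matrix (Fin m) (Fin p) ℝ, let V and V_1, …, V_k be symmetric positive definite m×m real matrices, and define the salted Fisher information matrix I_S = ∫_0^T J(t)ᵀ V⁻¹ J(t) dt + Σ_{j=1}^k J_jᵀ V_j⁻¹ J_j and the hybrid regressor Gramian G = ∫_0^T J(t)ᵀ J(t) dt + Σ_{j=1}^k J_jᵀ J_j. If there exists α > 0 such that G − α·I_p is positive semidefinite (hybrid persistence of excitation), then I_S is positive definite. -/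
open MeasureTheory Matrix

lemma quad_transpose_mul_mul {m p : ℕ} (A : Matrix (Fin m) (Fin p) ℝ)
    (W : Matrix (Fin m) (Fin m) ℝ) (x : Fin p → ℝ) :
    x ⬝ᵥ ((Aᵀ * W * A) *ᵥ x) = (A *ᵥ x) ⬝ᵥ (W *ᵥ (A *ᵥ x)) := by
  rw [← mulVec_mulVec, ← mulVec_mulVec, dotProduct_mulVec, vecMul_transpose]

lemma dot_sum_mulVec {p k : ℕ} (M : Fin k → Matrix (Fin p) (Fin p) ℝ) (x : Fin p → ℝ) :
    x ⬝ᵥ ((∑ j, M j) *ᵥ x) = ∑ j, x ⬝ᵥ (M j *ᵥ x) := by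
  have h : (∑ j, M j) *ᵥ x = ∑ j, (M j *ᵥ x) := by
    ext i
    simp only [mulVec, dotProduct, Matrix.sum_apply, Finset.sum_mul, Finset.sum_apply]
    exact Finset.sum_comm
  rw [h]
  simp only [dotProduct, Finset.sum_apply, Finset.mul_sum]
  exact Finset.sum_comm

set_option maxHeartbeats 1000000 in
lemma quad_integral_matrix {p : ℕ} (T : ℝ) (M : ℝ → Matrix (Fin p) (Fin p) ℝ)
    (hM : ∀ a b, IntervalIntegrable (fun t => M t a b) MeasureTheory.volume 0 T)
    (x : Fin p → ℝ) :
    x ⬝ᵥ ((Matrix.of fun a b => ∫ t in (0:ℝ)..T, M t a b) *ᵥ x)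
      = ∫ t in (0:ℝ)..T, x ⬝ᵥ (M t *ᵥ x) := by
  simp only [dotProduct, mulVec, Matrix.of_apply]
  have h2 : ∀ a, (∑ b, (∫ t in (0:ℝ)..T, M t a b) * x b)
      = ∫ t in (0:ℝ)..T, ∑ b, M t a b * x b := by
    intro a
    simp only [← intervalIntegral.integral_mul_const]
    exact (intervalIntegral.integral_finset_sum fun b _ => (hM a b).mul_const _).symm
  have h3 : ∀ a, x a * ∑ b, (∫ t in (0:ℝ)..T, M t a b) * x b
      = ∫ t in (0:ℝ)..T, x a * ∑ b, M t a b * x b := by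
    intro a
    rw [h2 a, intervalIntegral.integral_const_mul]
  calc (∑ a, x a * ∑ b, (∫ t in (0:ℝ)..T, M t a b) * x b)
      = ∑ a, ∫ t in (0:ℝ)..T, x a * ∑ b, M t a b * x b :=
        Finset.sum_congr rfl fun a _ => h3 a
    _ = ∫ t in (0:ℝ)..T, ∑ a, x a * ∑ b, M t a b * x b := by
        refine (intervalIntegral.integral_finset_sum fun a _ => ?_).symm
        have h := IntervalIntegrable.sum (μ := MeasureTheory.volume) (a := 0) (b := T)
          (f := fun b t => M t a b * x b) Finset.univ (fun b _ => (hM a b).mul_const (x b))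
        have he : (fun t => ∑ b, M t a b * x b) = ∑ b : Fin p, fun t => M t a b * x b := by
          funext t; simp
        exact IntervalIntegrable.const_mul (he ▸ h) (x a)

/-- HPE implies the salted Fisher information matrix is positive definite. -/
theorem sfim_posDef_of_hpe {m p k : ℕ}
    (T : ℝ) (hT : 0 < T)
    (J : ℝ → Matrix (Fin m) (Fin p) ℝ)
    (hJ : ContinuousOn J (Set.Icc 0 T))
    (Jd : Fin k → Matrix (Fin m) (Fin p) ℝ)
    (V : Matrix (Fin m) (Fin m) ℝ) (hV : V.PosDef)
    (Vd : Fin k → Matrix (Fin m) (Fin m) ℝ) (hVd : ∀ j, (Vd j).PosDef)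
    (IS G : Matrix (Fin p) (Fin p) ℝ)
    (hIS : IS = (Matrix.of fun a b => ∫ t in (0:ℝ)..T, ((J t)ᵀ * V⁻¹ * J t) a b)
        + ∑ j, (Jd j)ᵀ * (Vd j)⁻¹ * Jd j)
    (hG : G = (Matrix.of fun a b => ∫ t in (0:ℝ)..T, ((J t)ᵀ * J t) a b)
        + ∑ j, (Jd j)ᵀ * Jd j)
    (α : ℝ) (hα : 0 < α)
    (hHPE : (G - α • (1 : Matrix (Fin p) (Fin p) ℝ)).PosSemidef) :
    IS.PosDef := by
  have hVinv : V⁻¹.PosDef := hV.inv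
  have hVdinv : ∀ j, (Vd j)⁻¹.PosDef := fun j => (hVd j).inv
  -- continuity of entries
  have hJe : ∀ i j, ContinuousOn (fun t => J t i j) (Set.Icc 0 T) := by
    intro i j
    have hc : Continuous (fun M : Matrix (Fin m) (Fin p) ℝ => M i j) :=
      (continuous_apply j).comp (continuous_apply i)
    exact hc.comp_continuousOn hJ
  have hent : ∀ (W : Matrix (Fin m) (Fin m) ℝ) a b,
      ContinuousOn (fun t => ((J t)ᵀ * W * J t) a b) (Set.Icc 0 T) := by
    intro W a b
    simp only [Matrix.mul_apply, Matrix.transpose_apply]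
    exact continuousOn_finset_sum _ fun i _ =>
      (continuousOn_finset_sum _ fun c _ => (hJe c a).mul continuousOn_const).mul (hJe i b)
  have hint : ∀ (W : Matrix (Fin m) (Fin m) ℝ) a b,
      IntervalIntegrable (fun t => ((J t)ᵀ * W * J t) a b) MeasureTheory.volume 0 T :=
    fun W a b => (hent W a b).intervalIntegrable_of_Icc hT.le
  -- Hermitian part
  have hHermInt : ∀ (W : Matrix (Fin m) (Fin m) ℝ), Wᵀ = W →
      (Matrix.of fun a b => ∫ t in (0:ℝ)..T, ((J t)ᵀ * W * J t) a b).IsHermitian := by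
    intro W hWt
    have hsym : ∀ t a b, ((J t)ᵀ * W * J t) b a = ((J t)ᵀ * W * J t) a b := by
      intro t a b
      have h : ((J t)ᵀ * W * J t)ᵀ = (J t)ᵀ * W * J t := by
        calc ((J t)ᵀ * W * J t)ᵀ = (J t)ᵀ * (Wᵀ * ((J t)ᵀ)ᵀ) := by
              rw [Matrix.transpose_mul, Matrix.transpose_mul]
          _ = (J t)ᵀ * W * J t := by
              rw [hWt, Matrix.transpose_transpose, ← Matrix.mul_assoc]
      conv_lhs => rw [← h]
      rfl
    rw [Matrix.IsHermitian, conjTranspose_eq_transpose_of_trivial]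
    ext a b
    simp only [Matrix.transpose_apply, Matrix.of_apply]
    exact intervalIntegral.integral_congr fun t _ => hsym t a b
  have hVinvSymm : V⁻¹ᵀ = V⁻¹ := by
    have := hVinv.isHermitian
    rwa [Matrix.IsHermitian, conjTranspose_eq_transpose_of_trivial] at this
  refine posDef_iff_dotProduct_mulVec.mpr ⟨?_, ?_⟩
  · rw [hIS]
    refine Matrix.IsHermitian.add (hHermInt _ hVinvSymm) ?_
    have : ∀ j, ((Jd j)ᵀ * (Vd j)⁻¹ * Jd j).IsHermitian := by
      intro j
      have := ((hVdinv j).posSemidef.conjTranspose_mul_mul_same (Jd j)).1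
      simpa [conjTranspose_eq_transpose_of_trivial] using this
    rw [Matrix.IsHermitian, conjTranspose_eq_transpose_of_trivial, Matrix.transpose_sum]
    refine Finset.sum_congr rfl fun j _ => ?_
    have hj := this j
    rwa [Matrix.IsHermitian, conjTranspose_eq_transpose_of_trivial] at hj
  intro x hx
  simp only [star_trivial]
  -- nonnegativity helpers
  have hdotself : ∀ (y : Fin m → ℝ), 0 ≤ y ⬝ᵥ y := fun y =>
    Finset.sum_nonneg fun i _ => mul_self_nonneg _
  have hWquad : ∀ (W : Matrix (Fin m) (Fin m) ℝ), W.PosSemidef →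
      ∀ y : Fin m → ℝ, 0 ≤ y ⬝ᵥ (W *ᵥ y) := by
    intro W hW y
    simpa using hW.dotProduct_mulVec_nonneg y
  have hWquadPos : ∀ (W : Matrix (Fin m) (Fin m) ℝ), W.PosDef →
      ∀ y : Fin m → ℝ, y ≠ 0 → 0 < y ⬝ᵥ (W *ᵥ y) := by
    intro W hW y hy
    simpa using hW.dotProduct_mulVec_pos hy
  -- the HPE bound
  have hGx : α * (x ⬝ᵥ x) ≤ x ⬝ᵥ (G *ᵥ x) := by
    have := hHPE.dotProduct_mulVec_nonneg x
    simp only [star_trivial, Matrix.sub_mulVec, dotProduct_sub, smul_mulVec,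
      Matrix.one_mulVec, dotProduct_smul, smul_eq_mul] at this
    linarith
  have hxx : 0 < x ⬝ᵥ x := by
    rcases (Finset.sum_nonneg fun i (_ : i ∈ Finset.univ) =>
        mul_self_nonneg (x i) : (0:ℝ) ≤ x ⬝ᵥ x).lt_or_eq with h | h
    · exact h
    · exact absurd (dotProduct_self_eq_zero.mp h.symm) hx
  have hGpos : 0 < x ⬝ᵥ (G *ᵥ x) := lt_of_lt_of_le (mul_pos hα hxx) hGx
  -- expand G quadratic form
  have hGexp : x ⬝ᵥ (G *ᵥ x)
      = (∫ t in (0:ℝ)..T, (J t *ᵥ x) ⬝ᵥ (J t *ᵥ x))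
        + ∑ j, (Jd j *ᵥ x) ⬝ᵥ (Jd j *ᵥ x) := by
    rw [hG, Matrix.add_mulVec, dotProduct_add]
    congr 1
    · have h1 : ∀ t : ℝ, (J t)ᵀ * J t = (J t)ᵀ * (1 : Matrix (Fin m) (Fin m) ℝ) * J t := by
        intro t; rw [Matrix.mul_one]
      simp only [h1]
      rw [quad_integral_matrix T _ (hint 1) x]
      refine intervalIntegral.integral_congr fun t _ => ?_
      rw [quad_transpose_mul_mul, Matrix.one_mulVec]
    · rw [dot_sum_mulVec]
      refine Finset.sum_congr rfl fun j _ => ?_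
      have h1 : (Jd j)ᵀ * Jd j = (Jd j)ᵀ * (1 : Matrix (Fin m) (Fin m) ℝ) * Jd j := by rw [Matrix.mul_one]
      rw [h1, quad_transpose_mul_mul, Matrix.one_mulVec]
  -- expand IS quadratic form
  have hISexp : x ⬝ᵥ (IS *ᵥ x)
      = (∫ t in (0:ℝ)..T, (J t *ᵥ x) ⬝ᵥ (V⁻¹ *ᵥ (J t *ᵥ x)))
        + ∑ j, (Jd j *ᵥ x) ⬝ᵥ ((Vd j)⁻¹ *ᵥ (Jd j *ᵥ x)) := by
    rw [hIS, Matrix.add_mulVec, dotProduct_add]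
    congr 1
    · rw [quad_integral_matrix T _ (hint V⁻¹) x]
      exact intervalIntegral.integral_congr fun t _ => quad_transpose_mul_mul _ _ _
    · rw [dot_sum_mulVec]
      exact Finset.sum_congr rfl fun j _ => quad_transpose_mul_mul _ _ _
  rw [hISexp]
  -- continuity and integrability of the quadratic integrands
  have hfc : ContinuousOn (fun t => (J t *ᵥ x) ⬝ᵥ (V⁻¹ *ᵥ (J t *ᵥ x))) (Set.Icc 0 T) := by
    refine ContinuousOn.congr (f := fun t => x ⬝ᵥ (((J t)ᵀ * V⁻¹ * J t) *ᵥ x)) ?_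
      (fun t _ => (quad_transpose_mul_mul (J t) V⁻¹ x).symm)
    simp only [dotProduct, mulVec]
    exact continuousOn_finset_sum _ fun a _ => continuousOn_const.mul
      (continuousOn_finset_sum _ fun b _ => (hent V⁻¹ a b).mul continuousOn_const)
  have hgc : ContinuousOn (fun t => (J t *ᵥ x) ⬝ᵥ (J t *ᵥ x)) (Set.Icc 0 T) := by
    refine ContinuousOn.congr (f := fun t => x ⬝ᵥ (((J t)ᵀ * (1 : Matrix (Fin m) (Fin m) ℝ) * J t) *ᵥ x)) ?_
      (fun t _ => ((quad_transpose_mul_mul (J t) 1 x).trans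
        (by rw [Matrix.one_mulVec])).symm)
    simp only [dotProduct, mulVec]
    exact continuousOn_finset_sum _ fun a _ => continuousOn_const.mul
      (continuousOn_finset_sum _ fun b _ => (hent 1 a b).mul continuousOn_const)
  have hfi : IntervalIntegrable (fun t => (J t *ᵥ x) ⬝ᵥ (V⁻¹ *ᵥ (J t *ᵥ x)))
      MeasureTheory.volume 0 T := hfc.intervalIntegrable_of_Icc hT.le
  have hgi : IntervalIntegrable (fun t => (J t *ᵥ x) ⬝ᵥ (J t *ᵥ x))
      MeasureTheory.volume 0 T := hgc.intervalIntegrable_of_Icc hT.le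
  have hf_nonneg : ∀ t : ℝ, 0 ≤ (J t *ᵥ x) ⬝ᵥ (V⁻¹ *ᵥ (J t *ᵥ x)) :=
    fun t => hWquad _ hVinv.posSemidef _
  have hIf_nonneg : 0 ≤ ∫ t in (0:ℝ)..T, (J t *ᵥ x) ⬝ᵥ (V⁻¹ *ᵥ (J t *ᵥ x)) :=
    intervalIntegral.integral_nonneg hT.le fun t _ => hf_nonneg t
  have hsum_nonneg : ∀ j : Fin k, (0:ℝ) ≤ (Jd j *ᵥ x) ⬝ᵥ ((Vd j)⁻¹ *ᵥ (Jd j *ᵥ x)) :=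
    fun j => hWquad _ (hVdinv j).posSemidef _
  have hS_nonneg : (0:ℝ) ≤ ∑ j, (Jd j *ᵥ x) ⬝ᵥ ((Vd j)⁻¹ *ᵥ (Jd j *ᵥ x)) :=
    Finset.sum_nonneg fun j _ => hsum_nonneg j
  by_cases hd : ∃ j, Jd j *ᵥ x ≠ 0
  · -- a discrete term is positive
    obtain ⟨j, hj⟩ := hd
    have hpos : 0 < (Jd j *ᵥ x) ⬝ᵥ ((Vd j)⁻¹ *ᵥ (Jd j *ᵥ x)) :=
      hWquadPos _ (hVdinv j) _ hj
    have : 0 < ∑ j, (Jd j *ᵥ x) ⬝ᵥ ((Vd j)⁻¹ *ᵥ (Jd j *ᵥ x)) :=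
      Finset.sum_pos' (fun i _ => hsum_nonneg i) ⟨j, Finset.mem_univ j, hpos⟩
    linarith
  · -- the integral term must be positive
    push_neg at hd
    have hsumG : ∑ j, (Jd j *ᵥ x) ⬝ᵥ (Jd j *ᵥ x) = 0 := by
      refine Finset.sum_eq_zero fun j _ => ?_
      rw [hd j]; simp [dotProduct]
    have hIg_pos : 0 < ∫ t in (0:ℝ)..T, (J t *ᵥ x) ⬝ᵥ (J t *ᵥ x) := by
      rw [hGexp, hsumG, add_zero] at hGpos; exact hGpos
    have hIf_pos : 0 < ∫ t in (0:ℝ)..T, (J t *ᵥ x) ⬝ᵥ (V⁻¹ *ᵥ (J t *ᵥ x)) := by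
      rcases hIf_nonneg.lt_or_eq with h | h
      · exact h
      · exfalso
        have hzero : (fun t => (J t *ᵥ x) ⬝ᵥ (V⁻¹ *ᵥ (J t *ᵥ x)))
            =ᵐ[MeasureTheory.volume.restrict (Set.Ioc (0:ℝ) T)] 0 := by
          refine (MeasureTheory.integral_eq_zero_iff_of_nonneg
            (fun t => hf_nonneg t) ?_).mp ?_
          · exact (hfi.1 : _)
          · rw [← intervalIntegral.integral_of_le hT.le]; exact h.symm
        have hgzero : (fun t => (J t *ᵥ x) ⬝ᵥ (J t *ᵥ x))
            =ᵐ[MeasureTheory.volume.restrict (Set.Ioc (0:ℝ) T)] 0 := by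
          filter_upwards [hzero] with t ht
          have hJx : J t *ᵥ x = 0 := by
            by_contra hne
            exact (hWquadPos _ hVinv _ hne).ne' ht
          simp [hJx, dotProduct]
        have : (∫ t in (0:ℝ)..T, (J t *ᵥ x) ⬝ᵥ (J t *ᵥ x)) = 0 := by
          rw [intervalIntegral.integral_of_le hT.le]
          rw [MeasureTheory.integral_congr_ae hgzero]
          simp
        exact hIg_pos.ne' this
    linarith
end

section
/- Let T > 0, let J : ℝ → Matrix (Fin m) (Fin p) ℝ be continuous on [0,T], let J_1, …, J_k be matrices in Matrix (Fin m) (Fin p) ℝ, let V and V_1, …, V_k be symmetric positive definite m×m real matrices, and suppose c > 0 satisfies wᵀ V⁻¹ w ≥ c‖w‖² and wᵀ V_j⁻¹ w ≥ c‖w‖² for every w ∈ ℝ^m and every j. Define I_S = ∫_0^T J(t)ᵀ V⁻¹ J(t) dt + Σ_{j=1}^k J_jᵀ V_j⁻¹ J_j and G = ∫_0^T J(t)ᵀ J(t) dt + Σ_{j=1}^k J_jᵀ J_j. If α > 0 is such that G − α·I_p is positive semidefinite, then I_S − (c·α)·I_p is positive semidefinite; in particular vᵀ I_S v ≥ c·α·‖v‖²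 for all v ∈ ℝ^p. -/
set_option maxHeartbeats 1000000

open MeasureTheory Matrix

lemma quad_integral {p : ℕ} (T : ℝ) (M : ℝ → Matrix (Fin p) (Fin p) ℝ)
    (hM : ∀ a b, IntervalIntegrable (fun t => M t a b) volume 0 T)
    (v : Fin p → ℝ) :
    v ⬝ᵥ (Matrix.of fun a b => ∫ t in (0:ℝ)..T, M t a b).mulVec v
      = ∫ t in (0:ℝ)..T, v ⬝ᵥ (M t).mulVec v := by
  simp only [dotProduct, Matrix.mulVec, Matrix.of_apply]
  rw [intervalIntegral.integral_finset_sum]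
  · refine Finset.sum_congr rfl fun a _ => ?_
    rw [intervalIntegral.integral_const_mul, intervalIntegral.integral_finset_sum]
    · congr 1
      refine Finset.sum_congr rfl fun b _ => ?_
      rw [intervalIntegral.integral_mul_const]
    · exact fun b _ => (hM a b).mul_const _
  · intro a _
    have h2 : IntervalIntegrable (fun t => ∑ b, M t a b * v b) volume 0 T := by
      have h3 := IntervalIntegrable.sum (μ := volume) (a := 0) (b := T)
        Finset.univ (fun b _ => (hM a b).mul_const (v b))
      rwa [Finset.sum_fn] at h3
    exact h2.const_mul _

lemma sandwich_quad {m p : ℕ} (A : Matrix (Fin m) (Fin p) ℝ)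
    (B : Matrix (Fin m) (Fin m) ℝ) (v : Fin p → ℝ) :
    v ⬝ᵥ (Aᵀ * B * A).mulVec v = (A.mulVec v) ⬝ᵥ B.mulVec (A.mulVec v) := by
  rw [← Matrix.mulVec_mulVec, ← Matrix.mulVec_mulVec, Matrix.dotProduct_mulVec,
    Matrix.vecMul_transpose]

lemma gram_quad {m p : ℕ} (A : Matrix (Fin m) (Fin p) ℝ) (v : Fin p → ℝ) :
    v ⬝ᵥ (Aᵀ * A).mulVec v = ∑ i, (A.mulVec v) i ^ 2 := by
  rw [← Matrix.mulVec_mulVec, Matrix.dotProduct_mulVec, Matrix.vecMul_transpose]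
  simp [dotProduct, sq]

lemma quad_sum {p k : ℕ} (M : Fin k → Matrix (Fin p) (Fin p) ℝ) (v : Fin p → ℝ) :
    v ⬝ᵥ (∑ j, M j).mulVec v = ∑ j, v ⬝ᵥ (M j).mulVec v := by
  have hs : ∀ a b, (∑ j, M j) a b = ∑ j, M j a b := fun a b =>
    Matrix.sum_apply a b Finset.univ M
  simp only [dotProduct, Matrix.mulVec, hs, Finset.sum_mul, Finset.mul_sum]
  have h1 : ∀ a : Fin p, ∑ b : Fin p, ∑ j : Fin k, v a * (M j a b * v b)
      = ∑ j : Fin k, ∑ b : Fin p, v a * (M j a b * v b) := fun a => Finset.sum_comm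
  simp_rw [h1]
  exact Finset.sum_comm

/-- Quantitative version: HPE with level `α` and uniform weight lower bound `c`
    gives `I_S − c·α·I ⪰ 0`, hence `vᵀ I_S v ≥ c α ‖v‖²`. -/
theorem sfim_lower_bound_of_hpe {m p k : ℕ}
    (T : ℝ) (hT : 0 < T)
    (J : ℝ → Matrix (Fin m) (Fin p) ℝ)
    (hJ : ContinuousOn J (Set.Icc 0 T))
    (Jd : Fin k → Matrix (Fin m) (Fin p) ℝ)
    (V : Matrix (Fin m) (Fin m) ℝ) (hV : V.PosDef)
    (Vd : Fin k → Matrix (Fin m) (Fin m) ℝ) (hVd : ∀ j, (Vd j).PosDef)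
    (c : ℝ) (hc : 0 < c)
    (hcV : ∀ w : Fin m → ℝ, c * (∑ i, w i ^ 2) ≤ w ⬝ᵥ (V⁻¹).mulVec w)
    (hcVd : ∀ (j : Fin k) (w : Fin m → ℝ),
      c * (∑ i, w i ^ 2) ≤ w ⬝ᵥ ((Vd j)⁻¹).mulVec w)
    (IS G : Matrix (Fin p) (Fin p) ℝ)
    (hIS : IS = (Matrix.of fun a b => ∫ t in (0:ℝ)..T, ((J t)ᵀ * V⁻¹ * J t) a b)
        + ∑ j, (Jd j)ᵀ * (Vd j)⁻¹ * Jd j)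
    (hG : G = (Matrix.of fun a b => ∫ t in (0:ℝ)..T, ((J t)ᵀ * J t) a b)
        + ∑ j, (Jd j)ᵀ * Jd j)
    (α : ℝ) (hα : 0 < α)
    (hHPE : (G - α • (1 : Matrix (Fin p) (Fin p) ℝ)).PosSemidef) :
    (IS - (c * α) • (1 : Matrix (Fin p) (Fin p) ℝ)).PosSemidef ∧
      ∀ v : Fin p → ℝ, c * α * (∑ i, v i ^ 2) ≤ v ⬝ᵥ IS.mulVec v := by
  have huIcc : Set.uIcc (0:ℝ) T = Set.Icc 0 T := Set.uIcc_of_le hT.le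
  -- continuity of the two matrix-valued integrands
  have hM1c : ContinuousOn (fun t => (J t)ᵀ * V⁻¹ * J t) (Set.Icc 0 T) := by
    have hF : Continuous fun A : Matrix (Fin m) (Fin p) ℝ => Aᵀ * V⁻¹ * A :=
      ((continuous_id.matrix_transpose.matrix_mul continuous_const).matrix_mul continuous_id)
    exact hF.comp_continuousOn hJ
  have hM2c : ContinuousOn (fun t => (J t)ᵀ * J t) (Set.Icc 0 T) := by
    have hF : Continuous fun A : Matrix (Fin m) (Fin p) ℝ => Aᵀ * A :=
      (continuous_id.matrix_transpose.matrix_mul continuous_id)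
    exact hF.comp_continuousOn hJ
  have hI1 : ∀ a b, IntervalIntegrable (fun t => ((J t)ᵀ * V⁻¹ * J t) a b) volume 0 T := by
    intro a b
    apply ContinuousOn.intervalIntegrable
    rw [huIcc]
    exact ((continuous_apply b).comp (continuous_apply a)).comp_continuousOn hM1c
  have hI2 : ∀ a b, IntervalIntegrable (fun t => ((J t)ᵀ * J t) a b) volume 0 T := by
    intro a b
    apply ContinuousOn.intervalIntegrable
    rw [huIcc]
    exact ((continuous_apply b).comp (continuous_apply a)).comp_continuousOn hM2c
  -- quadratic form integrability
  have hq1I : ∀ v : Fin p → ℝ,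
      IntervalIntegrable (fun t => v ⬝ᵥ ((J t)ᵀ * V⁻¹ * J t).mulVec v) volume 0 T := by
    intro v
    apply ContinuousOn.intervalIntegrable
    rw [huIcc]
    have hF : Continuous fun A : Matrix (Fin p) (Fin p) ℝ => v ⬝ᵥ A.mulVec v :=
      continuous_const.dotProduct (continuous_id.matrix_mulVec continuous_const)
    exact hF.comp_continuousOn hM1c
  have hq2I : ∀ v : Fin p → ℝ,
      IntervalIntegrable (fun t => v ⬝ᵥ ((J t)ᵀ * J t).mulVec v) volume 0 T := by
    intro v
    apply ContinuousOn.intervalIntegrable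
    rw [huIcc]
    have hF : Continuous fun A : Matrix (Fin p) (Fin p) ℝ => v ⬝ᵥ A.mulVec v :=
      continuous_const.dotProduct (continuous_id.matrix_mulVec continuous_const)
    exact hF.comp_continuousOn hM2c
  -- key pointwise bound
  have hkey : ∀ (A : Matrix (Fin m) (Fin p) ℝ) (B : Matrix (Fin m) (Fin m) ℝ)
      (hB : ∀ w : Fin m → ℝ, c * (∑ i, w i ^ 2) ≤ w ⬝ᵥ B.mulVec w) (v : Fin p → ℝ),
      c * (v ⬝ᵥ (Aᵀ * A).mulVec v) ≤ v ⬝ᵥ (Aᵀ * B * A).mulVec v := by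
    intro A B hB v
    rw [sandwich_quad, gram_quad]
    exact hB (A.mulVec v)
  -- quadratic-form comparison: c * (vᵀ G v) ≤ vᵀ IS v
  have hmain : ∀ v : Fin p → ℝ, c * (v ⬝ᵥ G.mulVec v) ≤ v ⬝ᵥ IS.mulVec v := by
    intro v
    rw [hIS, hG, Matrix.add_mulVec, dotProduct_add, Matrix.add_mulVec,
      dotProduct_add, quad_integral T _ hI1 v, quad_integral T _ hI2 v,
      mul_add]
    gcongr
    · calc c * ∫ t in (0:ℝ)..T, v ⬝ᵥ ((J t)ᵀ * J t).mulVec v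
          = ∫ t in (0:ℝ)..T, c * (v ⬝ᵥ ((J t)ᵀ * J t).mulVec v) := by
            rw [intervalIntegral.integral_const_mul]
        _ ≤ ∫ t in (0:ℝ)..T, v ⬝ᵥ ((J t)ᵀ * V⁻¹ * J t).mulVec v := by
            apply intervalIntegral.integral_mono_on hT.le ((hq2I v).const_mul c) (hq1I v)
            intro t _
            exact hkey (J t) V⁻¹ hcV v
    · rw [quad_sum, quad_sum, Finset.mul_sum]
      exact Finset.sum_le_sum fun j _ => hkey (Jd j) ((Vd j)⁻¹) (hcVd j) v
  -- HPE bound: α ‖v‖² ≤ vᵀ G v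
  have hGlb : ∀ v : Fin p → ℝ, α * (∑ i, v i ^ 2) ≤ v ⬝ᵥ G.mulVec v := by
    intro v
    have := hHPE.dotProduct_mulVec_nonneg v
    simp only [Matrix.sub_mulVec, dotProduct_sub, Matrix.smul_mulVec,
      Matrix.one_mulVec, dotProduct_smul, star_trivial, smul_eq_mul] at this
    have hvv : v ⬝ᵥ v = ∑ i, v i ^ 2 := by simp [dotProduct, sq]
    rw [hvv] at this
    linarith
  have hfinal : ∀ v : Fin p → ℝ, c * α * (∑ i, v i ^ 2) ≤ v ⬝ᵥ IS.mulVec v := by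
    intro v
    calc c * α * (∑ i, v i ^ 2) = c * (α * ∑ i, v i ^ 2) := by ring
      _ ≤ c * (v ⬝ᵥ G.mulVec v) := by
          exact mul_le_mul_of_nonneg_left (hGlb v) hc.le
      _ ≤ v ⬝ᵥ IS.mulVec v := hmain v
  -- hermitianness of IS
  have hherm : IS.IsHermitian := by
    rw [hIS]
    apply Matrix.IsHermitian.add
    · have hM1h : ∀ t, ((J t)ᵀ * V⁻¹ * J t).IsHermitian := by
        intro t
        have h4 : ((J t)ᴴ * V⁻¹ * J t).IsHermitian :=
          Matrix.isHermitian_conjTranspose_mul_mul (J t) hV.posSemidef.1.inv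
        simpa using h4
      refine Matrix.IsHermitian.ext fun a b => ?_
      simp only [Matrix.of_apply, star_trivial]
      refine intervalIntegral.integral_congr fun t _ => ?_
      have h5 := (hM1h t).apply a b
      simpa using h5
    · have hh : ∀ j, ((Jd j)ᵀ * (Vd j)⁻¹ * Jd j).IsHermitian := by
        intro j
        have h4 : ((Jd j)ᴴ * (Vd j)⁻¹ * Jd j).IsHermitian :=
          Matrix.isHermitian_conjTranspose_mul_mul (Jd j) (hVd j).posSemidef.1.inv
        simpa using h4
      show (∑ j, (Jd j)ᵀ * (Vd j)⁻¹ * Jd j)ᴴ = _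
      rw [Matrix.conjTranspose_sum]
      exact Finset.sum_congr rfl fun j _ => hh j
  have hsm : ((c * α) • (1 : Matrix (Fin p) (Fin p) ℝ)).IsHermitian := by
    refine Matrix.IsHermitian.ext fun a b => ?_
    simp [Matrix.one_apply, eq_comm]
  refine ⟨.of_dotProduct_mulVec_nonneg (hherm.sub hsm) fun x => ?_, hfinal⟩
  simp only [star_trivial, Matrix.sub_mulVec, dotProduct_sub,
    Matrix.smul_mulVec, Matrix.one_mulVec, dotProduct_smul, smul_eq_mul]
  have hvv : x ⬝ᵥ x = ∑ i, x i ^ 2 := by simp [dotProduct, sq]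
  rw [hvv]
  linarith [hfinal x]
end

section
/- Let x : ℝ × ℝ^p → ℝ^n, τ : ℝ^p → ℝ, and g : ℝ^n × ℝ^p × ℝ → ℝ, and let θ₀ ∈ ℝ^p with t₀ := τ(θ₀). Assume: (i) τ is Fréchet differentiable at θ₀; (ii) x is Fréchet differentiable at (t₀, θ₀), with time-partial derivative f := D_t x(t₀,θ₀) ∈ ℝ^n and parameter-partial derivative Z := D_θ x(t₀,θ₀), a linear map ℝ^p → ℝ^n; (iii) g is Fréchet differentiable at (x(t₀,θ₀), θ₀, t₀), with partial derivatives gₓ : ℝ^n → ℝ, g_θ : ℝ^p → ℝ, and g_t ∈ ℝ; (iv) g(x(τ(θ),θ), θ, τ(θ)) = 0 for all θ in a neighborhood of θ₀; and (v) g_t + gₓ(f) ≠ 0 (transversal crossing). Then the derivative of the event time satisfies Dτ(θ₀) = −(gₓ ∘ Z + g_θ)/(g_t + gₓ(f)) as a linear map ℝ^p → ℝ; that is, for every v ∈ ℝ^p, Dτ(θ₀)(v) = −(gₓ(Z v) + g_θ(v))/(g_t + gₓ(f)). -/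
open scoped Topology

/-- Event-time sensitivity: if the event time `τ(θ)` is defined implicitly by a
    guard condition `g(x(τ(θ),θ), θ, τ(θ)) = 0` and the crossing is transversal,
    then `Dτ(θ₀) = −(gₓ ∘ Z + g_θ)/(g_t + gₓ(f))`. -/
theorem event_time_sensitivity {n p : ℕ}
    (x : ℝ × EuclideanSpace ℝ (Fin p) → EuclideanSpace ℝ (Fin n))
    (τ : EuclideanSpace ℝ (Fin p) → ℝ)
    (g : EuclideanSpace ℝ (Fin n) × EuclideanSpace ℝ (Fin p) × ℝ → ℝ)
    (θ₀ : EuclideanSpace ℝ (Fin p)) (t₀ : ℝ) (ht₀ : t₀ = τ θ₀)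
    -- (i) differentiability of the event time
    (Dτ : EuclideanSpace ℝ (Fin p) →L[ℝ] ℝ)
    (hτ : HasFDerivAt τ Dτ θ₀)
    -- (ii) differentiability of the trajectory, with partial derivatives f and Z
    (Dx : ℝ × EuclideanSpace ℝ (Fin p) →L[ℝ] EuclideanSpace ℝ (Fin n))
    (hx : HasFDerivAt x Dx (t₀, θ₀))
    (f : EuclideanSpace ℝ (Fin n)) (hf : f = Dx (1, 0))
    (Z : EuclideanSpace ℝ (Fin p) →L[ℝ] EuclideanSpace ℝ (Fin n))
    (hZ : ∀ v, Z v = Dx (0, v))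
    -- (iii) differentiability of the guard, with partial derivatives gₓ, g_θ, g_t
    (Dg : EuclideanSpace ℝ (Fin n) × EuclideanSpace ℝ (Fin p) × ℝ →L[ℝ] ℝ)
    (hg : HasFDerivAt g Dg (x (t₀, θ₀), θ₀, t₀))
    (gx : EuclideanSpace ℝ (Fin n) →L[ℝ] ℝ) (hgx : ∀ u, gx u = Dg (u, 0, 0))
    (gθ : EuclideanSpace ℝ (Fin p) →L[ℝ] ℝ) (hgθ : ∀ w, gθ w = Dg (0, w, 0))
    (gt : ℝ) (hgt : gt = Dg (0, 0, 1))
    -- (iv) the guard condition holds near θ₀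
    (hguard : ∀ᶠ θ in 𝓝 θ₀, g (x (τ θ, θ), θ, τ θ) = 0)
    -- (v) transversal crossing
    (htrans : gt + gx f ≠ 0) :
    ∀ v : EuclideanSpace ℝ (Fin p),
      Dτ v = -((gx (Z v) + gθ v) / (gt + gx f)) := by
  intro v
  -- derivative of θ ↦ (τ θ, θ)
  have h1 : HasFDerivAt (fun θ : EuclideanSpace ℝ (Fin p) => ((τ θ, θ) : ℝ × EuclideanSpace ℝ (Fin p)))
      (Dτ.prod (ContinuousLinearMap.id ℝ _)) θ₀ :=
    HasFDerivAt.prodMk hτ (hasFDerivAt_id θ₀)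
  have hx' : HasFDerivAt x Dx (τ θ₀, θ₀) := by rw [← ht₀]; exact hx
  have h2 := HasFDerivAt.comp (f := fun θ => (τ θ, θ)) θ₀ hx' h1
  -- derivative of θ ↦ (x (τ θ, θ), θ, τ θ)
  have h3 := HasFDerivAt.prodMk h2 (HasFDerivAt.prodMk (hasFDerivAt_id θ₀) hτ)
  have hg' : HasFDerivAt g Dg (x (τ θ₀, θ₀), θ₀, τ θ₀) := by rw [← ht₀]; exact hg
  have h4 := HasFDerivAt.comp θ₀ hg' h3
  -- the composite is eventually 0, so its derivative is 0
  have h5 : HasFDerivAt (fun θ => g (x (τ θ, θ), θ, τ θ))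
      (0 : EuclideanSpace ℝ (Fin p) →L[ℝ] ℝ) θ₀ := by
    have h0 : HasFDerivAt (fun _ : EuclideanSpace ℝ (Fin p) => (0 : ℝ))
        (0 : EuclideanSpace ℝ (Fin p) →L[ℝ] ℝ) θ₀ := hasFDerivAt_const 0 θ₀
    exact HasFDerivAt.congr_of_eventuallyEq h0 (hguard.mono fun θ hθ => hθ)
  have huniq := HasFDerivAt.unique h4 h5
  have key : Dg (Dx (Dτ v, v), v, Dτ v) = 0 := by
    have := congrArg (fun L : EuclideanSpace ℝ (Fin p) →L[ℝ] ℝ => L v) huniq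
    simpa using this
  -- decompose by linearity
  have hdx : Dx (Dτ v, v) = Dτ v • Dx (1, 0) + Dx (0, v) := by
    rw [← map_smul, ← map_add]
    congr 1
    simp [Prod.ext_iff]
  have hdg : Dg (Dx (Dτ v, v), v, Dτ v)
      = Dg (Dx (Dτ v, v), 0, 0) + Dg (0, v, 0) + Dτ v • Dg (0, 0, 1) := by
    rw [← map_smul, ← map_add, ← map_add]
    congr 1
    simp [Prod.ext_iff]
  have key2 : (Dτ v) * (gt + gx f) + (gx (Z v) + gθ v) = 0 := by
    rw [hf, hZ, hgθ, hgt, hgx, hgx]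
    have : Dg (Dx (Dτ v, v), 0, 0) = Dτ v * Dg (Dx (1,0), 0, 0) + Dg (Dx (0,v), 0, 0) := by
      rw [hdx]
      have : ((Dτ v • Dx (1, 0) + Dx (0, v), (0 : EuclideanSpace ℝ (Fin p)), (0:ℝ)) :
          EuclideanSpace ℝ (Fin n) × EuclideanSpace ℝ (Fin p) × ℝ)
          = Dτ v • (Dx (1,0), 0, 0) + (Dx (0,v), 0, 0) := by
        simp [Prod.ext_iff]
      rw [this, map_add, map_smul, smul_eq_mul]
    rw [hdg, this] at key
    simp only [map_smul, smul_eq_mul] at key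
    linarith [key]
  field_simp
  linarith [key2]
end

section
/- Let x, y : ℝ × ℝ^p → ℝ^n (pre- and post-event flows), R : ℝ^n × ℝ^p × ℝ → ℝ^n (reset map), g : ℝ^n × ℝ → ℝ (guard), and τ : ℝ^p → ℝ (event time), and let θ₀ ∈ ℝ^p with t₀ := τ(θ₀) and x₀ := x(t₀,θ₀). Assume: (i) τ is differentiable at θ₀, x and y are differentiable at (t₀,θ₀), R is differentiable at (x₀,θ₀,t₀), and g is differentiable at (x₀,t₀); (ii) for all θ in a neighborhood of θ₀: g(x(τ(θ),θ), τ(θ)) = 0 and y(τ(θ),θ) = R(x(τ(θ),θ), θ, τ(θ)); (iii) with f⁻ := D_t x(t₀,θ₀), f⁺ := D_t y(t₀,θ₀), gₓ := D_x g(x₀,t₀), g_t := D_t g(x₀,t₀), the transversality condition c := g_t + gₓ(f⁻) ≠ 0 holds. Let Z⁻ := D_θ x(t₀,θ₀) and Z⁺ := D_θ y(t₀,θ₀), and let D_x R, D_θ R, D_t R denote the partial derivatives of R at (x₀,θ₀,t₀). Then Z⁺ = Ξ ∘ Z⁻ + D_θ R, where Ξ is the saltation matrix Ξ := D_x R + c⁻¹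 • (f⁺ − D_x R(f⁻) − D_t R) ⊗ gₓ, i.e., the linear map v ↦ D_x R(v) + c⁻¹ gₓ(v) • (f⁺ − D_x R(f⁻) − D_t R). -/
open scoped Topology

/-- Jump part of the hybrid sensitivity evolution: at a transversal guard
    crossing with reset `y(τ(θ),θ) = R(x(τ(θ),θ), θ, τ(θ))`, the parameter
    sensitivity updates as `Z⁺ = Ξ ∘ Z⁻ + D_θ R`, where `Ξ` is the saltation
    matrix `Ξ = D_x R + c⁻¹ (f⁺ − D_x R f⁻ − D_t R) ⊗ gₓ`, `c = g_t + gₓ(f⁻)`. -/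
theorem sensitivity_saltation_update {n p : ℕ}
    (x y : ℝ × EuclideanSpace ℝ (Fin p) → EuclideanSpace ℝ (Fin n))
    (R : EuclideanSpace ℝ (Fin n) × EuclideanSpace ℝ (Fin p) × ℝ →
      EuclideanSpace ℝ (Fin n))
    (g : EuclideanSpace ℝ (Fin n) × ℝ → ℝ)
    (τ : EuclideanSpace ℝ (Fin p) → ℝ)
    (θ₀ : EuclideanSpace ℝ (Fin p)) (t₀ : ℝ) (ht₀ : t₀ = τ θ₀)
    (x₀ : EuclideanSpace ℝ (Fin n)) (hx₀ : x₀ = x (t₀, θ₀))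
    -- (i) differentiability
    (Dτ : EuclideanSpace ℝ (Fin p) →L[ℝ] ℝ) (hτ : HasFDerivAt τ Dτ θ₀)
    (Dx : ℝ × EuclideanSpace ℝ (Fin p) →L[ℝ] EuclideanSpace ℝ (Fin n))
    (hx : HasFDerivAt x Dx (t₀, θ₀))
    (Dy : ℝ × EuclideanSpace ℝ (Fin p) →L[ℝ] EuclideanSpace ℝ (Fin n))
    (hy : HasFDerivAt y Dy (t₀, θ₀))
    (DR : EuclideanSpace ℝ (Fin n) × EuclideanSpace ℝ (Fin p) × ℝ →L[ℝ]
      EuclideanSpace ℝ (Fin n))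
    (hR : HasFDerivAt R DR (x₀, θ₀, t₀))
    (Dg : EuclideanSpace ℝ (Fin n) × ℝ →L[ℝ] ℝ)
    (hg : HasFDerivAt g Dg (x₀, t₀))
    -- (ii) guard and reset relations near θ₀
    (hguard : ∀ᶠ θ in 𝓝 θ₀, g (x (τ θ, θ), τ θ) = 0)
    (hreset : ∀ᶠ θ in 𝓝 θ₀, y (τ θ, θ) = R (x (τ θ, θ), θ, τ θ))
    -- (iii) partial derivatives and transversality
    (fm : EuclideanSpace ℝ (Fin n)) (hfm : fm = Dx (1, 0))
    (fp : EuclideanSpace ℝ (Fin n)) (hfp : fp = Dy (1, 0))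
    (gx : EuclideanSpace ℝ (Fin n) →L[ℝ] ℝ) (hgx : ∀ u, gx u = Dg (u, 0))
    (gt : ℝ) (hgt : gt = Dg (0, 1))
    (c : ℝ) (hcdef : c = gt + gx fm) (hc : c ≠ 0)
    -- sensitivities and reset partial derivatives
    (Zm : EuclideanSpace ℝ (Fin p) →L[ℝ] EuclideanSpace ℝ (Fin n))
    (hZm : ∀ v, Zm v = Dx (0, v))
    (Zp : EuclideanSpace ℝ (Fin p) →L[ℝ] EuclideanSpace ℝ (Fin n))
    (hZp : ∀ v, Zp v = Dy (0, v))
    (DxR : EuclideanSpace ℝ (Fin n) →L[ℝ] EuclideanSpace ℝ (Fin n))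
    (hDxR : ∀ u, DxR u = DR (u, 0, 0))
    (DθR : EuclideanSpace ℝ (Fin p) →L[ℝ] EuclideanSpace ℝ (Fin n))
    (hDθR : ∀ w, DθR w = DR (0, w, 0))
    (DtR : EuclideanSpace ℝ (Fin n)) (hDtR : DtR = DR (0, 0, 1)) :
    ∀ v : EuclideanSpace ℝ (Fin p),
      Zp v = (DxR (Zm v) + (c⁻¹ * gx (Zm v)) • (fp - DxR fm - DtR)) + DθR v := by
  have hE : True := trivial
  -- φ θ = (τ θ, θ)
  have hφ : HasFDerivAt (fun θ : EuclideanSpace ℝ (Fin p) => (τ θ, θ))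
      (Dτ.prod (ContinuousLinearMap.id ℝ (EuclideanSpace ℝ (Fin p)))) θ₀ := HasFDerivAt.prodMk hτ (hasFDerivAt_id θ₀)
  have hx' : HasFDerivAt x Dx (τ θ₀, θ₀) := by rwa [← ht₀]
  have hxc : HasFDerivAt (x ∘ fun θ : EuclideanSpace ℝ (Fin p) => (τ θ, θ))
      (Dx.comp (Dτ.prod (ContinuousLinearMap.id ℝ (EuclideanSpace ℝ (Fin p))))) θ₀ := by
    apply HasFDerivAt.comp θ₀ _ hφ
    show HasFDerivAt x Dx (τ θ₀, θ₀)
    rwa [← ht₀]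
  have hy' : HasFDerivAt y Dy (τ θ₀, θ₀) := by rwa [← ht₀]
  have hyc : HasFDerivAt (y ∘ fun θ : EuclideanSpace ℝ (Fin p) => (τ θ, θ))
      (Dy.comp (Dτ.prod (ContinuousLinearMap.id ℝ (EuclideanSpace ℝ (Fin p))))) θ₀ := by
    apply HasFDerivAt.comp θ₀ _ hφ
    show HasFDerivAt y Dy (τ θ₀, θ₀)
    rwa [← ht₀]
  have hg' : HasFDerivAt g Dg (x (τ θ₀, θ₀), τ θ₀) := by rwa [← ht₀, ← hx₀]
  have hgc : HasFDerivAt (g ∘ fun θ : EuclideanSpace ℝ (Fin p) => (x (τ θ, θ), τ θ))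
      (Dg.comp ((Dx.comp (Dτ.prod (ContinuousLinearMap.id ℝ (EuclideanSpace ℝ (Fin p))))).prod Dτ)) θ₀ :=
    by
    apply HasFDerivAt.comp θ₀ _ (HasFDerivAt.prodMk hxc hτ)
    show HasFDerivAt g Dg (x (τ θ₀, θ₀), τ θ₀)
    rwa [← ht₀, ← hx₀]
  have hR' : HasFDerivAt R DR (x (τ θ₀, θ₀), θ₀, τ θ₀) := by rwa [← ht₀, ← hx₀]
  have hRc : HasFDerivAt (R ∘ fun θ : EuclideanSpace ℝ (Fin p) => (x (τ θ, θ), θ, τ θ))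
      (DR.comp ((Dx.comp (Dτ.prod (ContinuousLinearMap.id ℝ (EuclideanSpace ℝ (Fin p))))).prod
        ((ContinuousLinearMap.id ℝ (EuclideanSpace ℝ (Fin p))).prod Dτ))) θ₀ :=
    by
    apply HasFDerivAt.comp θ₀ _ (HasFDerivAt.prodMk hxc (HasFDerivAt.prodMk (hasFDerivAt_id θ₀) hτ))
    show HasFDerivAt R DR (x (τ θ₀, θ₀), θ₀, τ θ₀)
    rwa [← ht₀, ← hx₀]
  -- guard derivative is zero
  have hgc0 : HasFDerivAt (g ∘ fun θ : EuclideanSpace ℝ (Fin p) => (x (τ θ, θ), τ θ)) (0 : EuclideanSpace ℝ (Fin p) →L[ℝ] ℝ) θ₀ :=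
    (hasFDerivAt_const (0 : ℝ) θ₀).congr_of_eventuallyEq hguard
  have hGeq := hgc.unique hgc0
  -- reset derivative identity
  have hRy : HasFDerivAt (y ∘ fun θ : EuclideanSpace ℝ (Fin p) => (τ θ, θ))
      (DR.comp ((Dx.comp (Dτ.prod (ContinuousLinearMap.id ℝ (EuclideanSpace ℝ (Fin p))))).prod
        ((ContinuousLinearMap.id ℝ (EuclideanSpace ℝ (Fin p))).prod Dτ))) θ₀ :=
    hRc.congr_of_eventuallyEq hreset
  have hReq := hyc.unique hRy
  -- linearity decompositions
  have hDx : ∀ (s : ℝ) (w : EuclideanSpace ℝ (Fin p)), Dx (s, w) = s • fm + Zm w := by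
    intro s w
    have h : (s, w) = s • ((1 : ℝ), (0 : EuclideanSpace ℝ (Fin p))) + ((0 : ℝ), w) := by
      simp [Prod.ext_iff]
    rw [h, map_add, map_smul, hfm, hZm]
  have hDy : ∀ (s : ℝ) (w : EuclideanSpace ℝ (Fin p)), Dy (s, w) = s • fp + Zp w := by
    intro s w
    have h : (s, w) = s • ((1 : ℝ), (0 : EuclideanSpace ℝ (Fin p))) + ((0 : ℝ), w) := by
      simp [Prod.ext_iff]
    rw [h, map_add, map_smul, hfp, hZp]
  have hDg : ∀ (u : EuclideanSpace ℝ (Fin n)) (s : ℝ),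
      Dg (u, s) = gx u + s * gt := by
    intro u s
    have h : (u, s) = ((u, (0 : ℝ)) : EuclideanSpace ℝ (Fin n) × ℝ)
        + s • (0, (1 : ℝ)) := by simp [Prod.ext_iff]
    rw [h, map_add, map_smul, hgx, hgt, smul_eq_mul]
  have hDR : ∀ (u : EuclideanSpace ℝ (Fin n)) (w : EuclideanSpace ℝ (Fin p)) (s : ℝ),
      DR (u, w, s) = DxR u + DθR w + s • DtR := by
    intro u w s
    have h : ((u, w, s) : EuclideanSpace ℝ (Fin n) × EuclideanSpace ℝ (Fin p) × ℝ)
        = (u, 0, 0) + (0, w, 0) + s • (0, 0, (1 : ℝ)) := by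
      simp [Prod.ext_iff]
    rw [h, map_add, map_add, map_smul, hDxR, hDθR, hDtR]
  intro v
  -- extract pointwise equations
  have Eg : gx (Dτ v • fm + Zm v) + Dτ v * gt = 0 := by
    have := congrFun (congrArg DFunLike.coe hGeq) v
    simpa [ContinuousLinearMap.comp_apply, hDx, hDg] using this
  have hτv : Dτ v = -(c⁻¹ * gx (Zm v)) := by
    have h1 : Dτ v * c = -gx (Zm v) := by
      rw [hcdef]
      have := Eg
      rw [map_add, map_smul] at this
      simp only [smul_eq_mul] at this
      linarith
    field_simp
    linarith [h1]
  have Er : Dτ v • fp + Zp v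
      = DxR (Dτ v • fm + Zm v) + DθR v + Dτ v • DtR := by
    have := congrFun (congrArg DFunLike.coe hReq) v
    simpa [ContinuousLinearMap.comp_apply, hDx, hDy, hDR] using this
  have Er' : Zp v = DxR (Zm v) + DθR v + Dτ v • (DxR fm + DtR - fp) := by
    rw [map_add, map_smul] at Er
    have := Er
    rw [smul_sub, smul_add]
    abel_nf
    abel_nf at this
    linear_combination (norm := module) this
  rw [Er', hτv]
  module
end
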